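/- For the two-dimensional case, the Kolmogorov–Arnold outer sum has exactly 2n+1 = 5 terms: any continuous f : [0,1]² → ℝ admits a representation f(x₁,x₂) = Σ_{q=0}^{4} Φ_q(φ_{q,1}(x₁) + φ_{q,2}(x₂)) with all Φ_q, φ_{q,p} continuous univariate functions. -/

import Mathlib

open Set unitInterval BoundedContinuousFunction
noncomputable section
namespace KA
abbrev D := C(unitInterval, ℝ)
abbrev E := Fin 5 → D × D
abbrev Csq := C(unitInterval × unitInterval, ℝ)

def pmap (e : E) (q : Fin 5) (s t : unitInterval) : ℝ := (e q).1 s + (e q).2 t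

def Rep (e : E) (f : Csq) (θ B : ℝ) : Prop :=
  ∃ Φ : Fin 5 → (ℝ →ᵇ ℝ), (∀ q, ‖Φ q‖ ≤ B) ∧
    ∀ st : unitInterval × unitInterval, |f st - ∑ q, Φ q (pmap e q st.1 st.2)| ≤ θ

def G (f : Csq) : Set E := {e | ∃ θ, θ < (4/5)*‖f‖ ∧ Rep e f θ (‖f‖/3)}

/-- left endpoint of the `n`-th interval of the `q`-th grid at scale `N` -/
def Lpt (q : Fin 5) (N : ℕ) (n : ℕ) : ℝ := (5*n + q - 5)/(5*N)

def bpt (q : Fin 5) (N : ℕ) (n : ℕ) : ℝ := Lpt q N n + 4/(5*N)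

def ramp (q : Fin 5) (N : ℕ) (n : ℕ) (t : unitInterval) : ℝ :=
  max 0 (min 1 (5*N*((t:ℝ) - bpt q N n)))

lemma ramp_continuous (q N n) : Continuous (ramp q N n) := by
  unfold ramp
  exact continuous_const.max (continuous_const.min
    (continuous_const.mul (continuous_subtype_val.sub continuous_const)))

lemma ramp_nonneg (q N n t) : 0 ≤ ramp q N n t := le_max_left _ _

lemma ramp_le_one (q N n t) : ramp q N n t ≤ 1 :=
  max_le zero_le_one (min_le_left _ _)

lemma ramp_eq_one {q : Fin 5} {N n : ℕ} (hN : 1 ≤ N) {t : unitInterval}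
    (h : Lpt q N (n+1) ≤ (t:ℝ)) : ramp q N n t = 1 := by
  have hN' : (0:ℝ) < 5*N := by positivity
  have : (1:ℝ) ≤ 5*N*((t:ℝ) - bpt q N n) := by
    have hb : bpt q N n + 1/(5*N) = Lpt q N (n+1) := by
      unfold bpt Lpt; push_cast; field_simp; ring
    rw [← hb] at h
    have : (1:ℝ)/(5*N) ≤ (t:ℝ) - bpt q N n := by linarith
    calc (1:ℝ) = 5*N*(1/(5*N)) := by field_simp
      _ ≤ 5*N*((t:ℝ) - bpt q N n) := by
          exact mul_le_mul_of_nonneg_left this (le_of_lt hN')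
  unfold ramp
  rw [min_eq_left this, max_eq_right zero_le_one]

lemma ramp_eq_zero {q : Fin 5} {N n : ℕ} {t : unitInterval}
    (h : (t:ℝ) ≤ bpt q N n) : ramp q N n t = 0 := by
  have h2 : 5*(N:ℝ)*((t:ℝ) - bpt q N n) ≤ 0 := by
    apply mul_nonpos_of_nonneg_of_nonpos
    · positivity
    · linarith
  unfold ramp
  have : min 1 (5*(N:ℝ)*((t:ℝ) - bpt q N n)) ≤ 0 := le_trans (min_le_right _ _) h2
  exact max_eq_left this

/-- the piecewise-linear function with value `v n` on the `n`-th grid interval -/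
def W (q : Fin 5) (N M : ℕ) (v : ℕ → ℝ) : D :=
  ⟨fun t => v 0 + ∑ n ∈ Finset.range M, (v (n+1) - v n) * ramp q N n t, by
    refine continuous_const.add (continuous_finset_sum _ fun n _ => ?_)
    exact continuous_const.mul (ramp_continuous q N n)⟩

lemma Lpt_mono {q : Fin 5} {N : ℕ} (hN : 1 ≤ N) : Monotone (Lpt q N) := by
  intro a b hab
  unfold Lpt
  have h5 : (0:ℝ) < 5*N := by positivity
  gcongr


lemma bpt_lt_Lpt_succ {q : Fin 5} {N : ℕ} (hN : 1 ≤ N) (n : ℕ) :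
    bpt q N n < Lpt q N (n+1) := by
  unfold bpt Lpt
  have : (0:ℝ) < 5*N := by positivity
  rw [← add_div, div_lt_div_iff₀ this this]
  push_cast; nlinarith

/-- evaluation of `W` on the `k`-th interval -/
lemma W_eval_on_interval {q : Fin 5} {N M k : ℕ} (hN : 1 ≤ N) (hk : k ≤ M)
    (v : ℕ → ℝ) {t : unitInterval} (h1 : Lpt q N k ≤ (t:ℝ)) (h2 : (t:ℝ) ≤ bpt q N k) :
    W q N M v t = v k := by
  have key : ∑ n ∈ Finset.range M, (v (n+1) - v n) * ramp q N n t
      = ∑ n ∈ Finset.range k, (v (n+1) - v n) := by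
    rw [Finset.range_eq_Ico, ← Finset.sum_Ico_consecutive _ (Nat.zero_le k) hk]
    have hA : ∑ n ∈ Finset.Ico 0 k, (v (n+1) - v n) * ramp q N n t
        = ∑ n ∈ Finset.Ico 0 k, (v (n+1) - v n) := by
      refine Finset.sum_congr rfl fun n hn => ?_
      rw [Finset.mem_Ico] at hn
      have : Lpt q N (n+1) ≤ (t:ℝ) := le_trans (Lpt_mono hN hn.2) h1
      rw [ramp_eq_one hN this, mul_one]
    have hB : ∑ n ∈ Finset.Ico k M, (v (n+1) - v n) * ramp q N n t = 0 := by
      refine Finset.sum_eq_zero fun n hn => ?_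
      rw [Finset.mem_Ico] at hn
      have hbk : bpt q N k ≤ bpt q N n := by
        unfold bpt
        have := Lpt_mono (q := q) hN hn.1
        linarith
      rw [ramp_eq_zero (le_trans h2 hbk), mul_zero]
    rw [hA, hB, add_zero, Finset.range_eq_Ico]
  show v 0 + _ = v k
  rw [key, Finset.sum_range_sub (fun n => v n)]
  ring

/-- evaluation of `W` on the `k`-th block (interval plus following gap) -/
lemma W_eval_on_block {q : Fin 5} {N M k : ℕ} (hN : 1 ≤ N) (hk : k ≤ M)
    (v : ℕ → ℝ) {t : unitInterval} (h1 : Lpt q N k ≤ (t:ℝ)) (h2 : (t:ℝ) ≤ Lpt q N (k+1)) :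
    ∃ c, 0 ≤ c ∧ c ≤ 1 ∧ W q N M v t = v k + c * (v (k+1) - v k) := by
  rcases eq_or_lt_of_le hk with rfl | hkM
  · -- k = M : all ramps in range M are 1
    refine ⟨0, le_refl 0, zero_le_one, ?_⟩
    have key : ∑ n ∈ Finset.range k, (v (n+1) - v n) * ramp q N n t
        = ∑ n ∈ Finset.range k, (v (n+1) - v n) := by
      refine Finset.sum_congr rfl fun n hn => ?_
      rw [Finset.mem_range] at hn
      have : Lpt q N (n+1) ≤ (t:ℝ) := le_trans (Lpt_mono hN hn) h1
      rw [ramp_eq_one hN this, mul_one]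
    show v 0 + _ = _
    rw [key, Finset.sum_range_sub (fun n => v n)]
    ring
  · refine ⟨ramp q N k t, ramp_nonneg q N k t, ramp_le_one q N k t, ?_⟩
    have key : ∑ n ∈ Finset.range M, (v (n+1) - v n) * ramp q N n t
        = (∑ n ∈ Finset.range k, (v (n+1) - v n)) + (v (k+1) - v k) * ramp q N k t := by
      rw [Finset.range_eq_Ico, ← Finset.sum_Ico_consecutive _ (Nat.zero_le k) (le_of_lt hkM),
        ← Finset.sum_Ico_consecutive _ (Nat.le_succ k) hkM]
      have hA : ∑ n ∈ Finset.Ico 0 k, (v (n+1) - v n) * ramp q N n t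
          = ∑ n ∈ Finset.Ico 0 k, (v (n+1) - v n) := by
        refine Finset.sum_congr rfl fun n hn => ?_
        rw [Finset.mem_Ico] at hn
        have : Lpt q N (n+1) ≤ (t:ℝ) := le_trans (Lpt_mono hN hn.2) h1
        rw [ramp_eq_one hN this, mul_one]
      have hB : ∑ n ∈ Finset.Ico (k+1) M, (v (n+1) - v n) * ramp q N n t = 0 := by
        refine Finset.sum_eq_zero fun n hn => ?_
        rw [Finset.mem_Ico] at hn
        have hbk : Lpt q N (k+1) ≤ bpt q N n := by
          have h3 := Lpt_mono (q := q) hN hn.1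
          have h4 : Lpt q N n ≤ bpt q N n := by
            unfold bpt
            have : (0:ℝ) < 5*N := by positivity
            have : (0:ℝ) ≤ 4/(5*(N:ℝ)) := by positivity
            linarith
          linarith
        rw [ramp_eq_zero (le_trans h2 hbk), mul_zero]
      have hC : ∑ n ∈ Finset.Ico k (k+1), (v (n+1) - v n) * ramp q N n t
          = (v (k+1) - v k) * ramp q N k t := by
        rw [Finset.sum_Ico_eq_sum_range]
        simp
      rw [hA, hB, hC, add_zero, Finset.range_eq_Ico]
    show v 0 + _ = _
    rw [key, Finset.sum_range_sub (fun n => v n)]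
    ring

lemma qcast_le (q : Fin 5) : ((q:ℕ):ℝ) ≤ 4 := by
  have : (q:ℕ) ≤ 4 := Nat.lt_succ_iff.mp q.isLt
  exact_mod_cast this

lemma qcast_nonneg (q : Fin 5) : (0:ℝ) ≤ ((q:ℕ):ℝ) := by positivity

lemma cover {q : Fin 5} {N : ℕ} (hN : 1 ≤ N) (t : unitInterval) :
    ∃ k, k ≤ N ∧ Lpt q N k ≤ (t:ℝ) ∧ (t:ℝ) ≤ Lpt q N (k+1) := by
  have hN' : (0:ℝ) < 5*N := by positivity
  have ht0 : (0:ℝ) ≤ t := t.2.1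
  have ht1 : (t:ℝ) ≤ 1 := t.2.2
  set u : ℝ := (5*N*(t:ℝ) - q)/5 with hu
  have hu1 : (-1:ℝ) < u := by
    rw [hu]
    have := qcast_le q
    have : 5*(N:ℝ)*(t:ℝ) - q ≥ -4 := by nlinarith [qcast_le q]
    linarith
  have hk0 : 0 ≤ ⌈u⌉ := by
    have : (-1:ℤ) < ⌈u⌉ := Int.lt_ceil.mpr (by exact_mod_cast hu1)
    omega
  refine ⟨⌈u⌉.toNat, ?_, ?_, ?_⟩
  · have : ⌈u⌉ ≤ (N:ℤ) := by
      apply Int.ceil_le.mpr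
      rw [hu]
      push_cast
      rw [div_le_iff₀ (by norm_num : (0:ℝ) < 5)]
      nlinarith [qcast_nonneg q]
    omega
  · have hceil : (⌈u⌉.toNat : ℝ) = (⌈u⌉ : ℝ) := by exact_mod_cast Int.toNat_of_nonneg hk0
    have h2 : (⌈u⌉:ℝ) < u + 1 := by exact_mod_cast Int.ceil_lt_add_one u
    unfold Lpt
    rw [div_le_iff₀ hN']
    rw [hceil]
    rw [hu] at h2
    nlinarith
  · have hceil : (⌈u⌉.toNat : ℝ) = (⌈u⌉ : ℝ) := by exact_mod_cast Int.toNat_of_nonneg hk0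
    have h2 : u ≤ (⌈u⌉:ℝ) := Int.le_ceil u
    unfold Lpt
    rw [le_div_iff₀ hN']
    push_cast
    rw [hceil]
    rw [hu] at h2
    nlinarith

def goodp (q : Fin 5) (N : ℕ) (t : unitInterval) : Prop :=
  ∃ k, k ≤ N + 1 ∧ Lpt q N k ≤ (t:ℝ) ∧ (t:ℝ) ≤ bpt q N k

lemma bad_strict {q : Fin 5} {N : ℕ} (hN : 1 ≤ N) {t : unitInterval} (h : ¬ goodp q N t) :
    ∃ k : ℕ, bpt q N k < (t:ℝ) ∧ (t:ℝ) < Lpt q N (k+1) := by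
  obtain ⟨k, hkN, h1, h2⟩ := cover (q := q) hN t
  refine ⟨k, ?_, ?_⟩
  · by_contra hc
    push_neg at hc
    exact h ⟨k, by omega, h1, hc⟩
  · rcases lt_or_eq_of_le h2 with h3 | h3
    · exact h3
    · exfalso
      apply h
      refine ⟨k+1, by omega, le_of_eq h3.symm, ?_⟩
      unfold bpt
      have h4 : (0:ℝ) ≤ 4/(5*(N:ℝ)) := by positivity
      linarith [h3, h4]

lemma bad_unique {N : ℕ} (hN : 1 ≤ N) (t : unitInterval) {q q' : Fin 5}
    (h : ¬ goodp q N t) (h' : ¬ goodp q' N t) : q = q' := by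
  have hN' : (0:ℝ) < 5*N := by positivity
  obtain ⟨k, hk1, hk2⟩ := bad_strict hN h
  obtain ⟨k', hk1', hk2'⟩ := bad_strict hN h'
  unfold bpt at hk1 hk1'
  unfold Lpt at hk1 hk2 hk1' hk2'
  rw [← add_div, div_lt_iff₀ hN'] at hk1 hk1'
  rw [lt_div_iff₀ hN'] at hk2 hk2'
  push_cast at hk1 hk2 hk1' hk2'
  have key : (5*(k:ℤ) + (q:ℕ) : ℤ) = 5*(k':ℤ) + ((q':ℕ):ℤ) := by
    have hlt : |(5*(k:ℤ) + (q:ℕ) : ℤ) - (5*(k':ℤ) + ((q':ℕ):ℤ))| < 1 := by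
      rw [← @Int.cast_lt ℝ]
      push_cast
      rw [abs_lt]
      constructor <;> linarith [hk1, hk2, hk1', hk2']
    have := Int.abs_lt_one_iff.mp hlt
    omega
  have : (q:ℕ) = (q':ℕ) := by omega
  exact Fin.ext this

lemma seg_abs (a b x c : ℝ) (h0 : 0 ≤ c) (h1 : c ≤ 1) :
    |a + c*(b-a) - x| ≤ max |a-x| |b-x| := by
  have h : a + c*(b-a) - x = (1-c)*(a-x) + c*(b-x) := by ring
  rw [h]
  refine (abs_add_le _ _).trans ?_
  rw [abs_mul, abs_mul, abs_of_nonneg (by linarith : (0:ℝ) ≤ 1-c), abs_of_nonneg h0]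
  calc (1-c)*|a-x| + c*|b-x|
      ≤ (1-c)*(max |a-x| |b-x|) + c*(max |a-x| |b-x|) := by
        refine add_le_add ?_ ?_
        · exact mul_le_mul_of_nonneg_left (le_max_left _ _) (by linarith)
        · exact mul_le_mul_of_nonneg_left (le_max_right _ _) h0
    _ = max |a-x| |b-x| := by ring

lemma clamp_abs (a x : ℝ) (hx0 : 0 ≤ x) (hx1 : x ≤ 1) :
    |max 0 (min 1 a) - x| ≤ |a - x| := by
  rcases le_total a 0 with h | h
  · rw [min_eq_right (by linarith), max_eq_left (by linarith)]
    rw [abs_of_nonpos (by linarith), abs_of_nonpos (by linarith)]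
    linarith
  · rcases le_total 1 a with h2 | h2
    · rw [min_eq_left h2, max_eq_right zero_le_one]
      rw [abs_of_nonneg (by linarith), abs_of_nonneg (by linarith)]
      linarith
    · rw [min_eq_right h2, max_eq_right h]
def tri (η : ℝ) (w : ℝ) : ℝ := max 0 (1 - |w|/η)

lemma tri_continuous {η : ℝ} (hη : 0 < η) : Continuous (tri η) :=
  continuous_const.max (continuous_const.sub (continuous_abs.div_const η))

lemma tri_nonneg (η w : ℝ) : 0 ≤ tri η w := le_max_left _ _

lemma tri_le_one {η : ℝ} (hη : 0 < η) (w : ℝ) : tri η w ≤ 1 := by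
  unfold tri
  refine max_le zero_le_one ?_
  have : 0 ≤ |w|/η := by positivity
  linarith

lemma tri_zero {η : ℝ} (hη : 0 < η) : tri η 0 = 1 := by
  unfold tri
  rw [abs_zero, zero_div, sub_zero, max_eq_right zero_le_one]

lemma tri_eq_zero {η w : ℝ} (hη : 0 < η) (h : η ≤ |w|) : tri η w = 0 := by
  unfold tri
  refine max_eq_left ?_
  rw [sub_nonpos, le_div_iff₀ hη]
  linarith

lemma abs_lt_of_tri_ne_zero {η w : ℝ} (hη : 0 < η) (h : tri η w ≠ 0) : |w| < η := by
  by_contra hc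
  push_neg at hc
  exact h (tri_eq_zero hη hc)

def Phi (η : ℝ) (S : Finset (ℕ × ℕ)) (c v : ℕ × ℕ → ℝ) : ℝ → ℝ :=
  fun z => ∑ p ∈ S, v p * tri η (z - c p)

lemma Phi_continuous {η : ℝ} (hη : 0 < η) (S : Finset (ℕ × ℕ)) (c v : ℕ × ℕ → ℝ) :
    Continuous (Phi η S c v) := by
  refine continuous_finset_sum _ fun p _ => ?_
  exact continuous_const.mul ((tri_continuous hη).comp (continuous_id.sub continuous_const))

lemma Phi_bound {η : ℝ} (hη : 0 < η) (S : Finset (ℕ × ℕ)) (c v : ℕ × ℕ → ℝ) {V : ℝ}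
    (hV : 0 ≤ V) (hv : ∀ p ∈ S, |v p| ≤ V)
    (hsep : ∀ p ∈ S, ∀ p' ∈ S, p ≠ p' → 3*η ≤ |c p - c p'|) (z : ℝ) :
    |Phi η S c v z| ≤ V := by
  unfold Phi
  by_cases hex : ∃ p₀ ∈ S, tri η (z - c p₀) ≠ 0
  · obtain ⟨p₀, hp₀S, hp₀⟩ := hex
    rw [Finset.sum_eq_single_of_mem p₀ hp₀S ?_]
    · calc |v p₀ * tri η (z - c p₀)| = |v p₀| * |tri η (z - c p₀)| := abs_mul _ _
        _ ≤ V * 1 := by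
            refine mul_le_mul (hv p₀ hp₀S) ?_ (abs_nonneg _) hV
            rw [abs_of_nonneg (tri_nonneg _ _)]
            exact tri_le_one hη _
        _ = V := mul_one V
    · intro p hpS hne
      have h1 : |z - c p₀| < η := abs_lt_of_tri_ne_zero hη hp₀
      have h2 : 3*η ≤ |c p - c p₀| := hsep p hpS p₀ hp₀S hne
      have h3 : η ≤ |z - c p| := by
        have := abs_sub_abs_le_abs_sub (c p - c p₀) (c p - z)
        have h4 : |c p - c p₀ - (c p - z)| = |z - c p₀| := by
          congr 1; ring
        rw [h4] at this
        have h5 : |c p - z| = |z - c p| := abs_sub_comm _ _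
        linarith
      rw [tri_eq_zero hη h3, mul_zero]
  · push_neg at hex
    rw [Finset.sum_eq_zero fun p hp => by rw [hex p hp, mul_zero]]
    rw [abs_zero]; exact hV

lemma Phi_value {η : ℝ} (hη : 0 < η) (S : Finset (ℕ × ℕ)) (c v : ℕ × ℕ → ℝ)
    {p₀ : ℕ × ℕ} (hp₀ : p₀ ∈ S)
    (hsep : ∀ p ∈ S, ∀ p' ∈ S, p ≠ p' → 3*η ≤ |c p - c p'|) :
    Phi η S c v (c p₀) = v p₀ := by
  unfold Phi
  rw [Finset.sum_eq_single_of_mem p₀ hp₀ ?_]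
  · rw [sub_self, tri_zero hη, mul_one]
  · intro p hpS hne
    have h2 : 3*η ≤ |c p - c p₀| := hsep p hpS p₀ hp₀ hne
    have h3 : η ≤ |c p₀ - c p| := by
      rw [abs_sub_comm]; linarith
    rw [tri_eq_zero hη h3, mul_zero]

lemma one_le_abs_nat_sub {l l' : ℕ} (h : l ≠ l') : (1:ℝ) ≤ |(l:ℝ) - l'| := by
  rcases lt_or_gt_of_ne h with h | h
  · have h2 : l + 1 ≤ l' := h
    have h3 : (l:ℝ) + 1 ≤ l' := by exact_mod_cast h2
    rw [abs_of_nonpos (by linarith)]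
    linarith
  · have h2 : l' + 1 ≤ l := h
    have h3 : (l':ℝ) + 1 ≤ l := by exact_mod_cast h2
    rw [abs_of_nonneg (by linarith)]
    linarith

lemma sep_lemma {β : ℝ} (hβ : 0 < β) (M : ℕ) (A B : ℕ → ℤ)
    {k l k' l' : ℕ} (hk : k ≤ M) (hl : l ≤ M) (hk' : k' ≤ M) (hl' : l' ≤ M)
    (hne : (k,l) ≠ (k',l')) :
    β/(8*(M+2))/(8*(M+2)) ≤
      |(β*(A k) + (β/(8*(M+2)))*k + (β*(B l) + (β/(8*(M+2))/(8*(M+2)))*l))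
        - (β*(A k') + (β/(8*(M+2)))*k' + (β*(B l') + (β/(8*(M+2))/(8*(M+2)))*l'))| := by
  have hM0 : (0:ℝ) ≤ M := Nat.cast_nonneg M
  set γ : ℝ := β/(8*(M+2)) with hγ
  set γ' : ℝ := γ/(8*(M+2)) with hγ'
  have hγpos : 0 < γ := by rw [hγ]; positivity
  have hγ'pos : 0 < γ' := by rw [hγ']; positivity
  have hγM : γ * ((M:ℝ)+2) = β/8 := by rw [hγ]; field_simp
  have hγ'M : γ' * ((M:ℝ)+2) = γ/8 := by rw [hγ']; field_simp
  have hgM : γ*(M:ℝ) ≤ β/8 := by nlinarith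
  have hg'M : γ'*(M:ℝ) ≤ γ/8 := by nlinarith
  have hγβ : γ ≤ β/16 := by nlinarith
  have hγ'γ : γ' ≤ γ/16 := by nlinarith
  have habs : ∀ m m' : ℕ, m ≤ M → m' ≤ M → |(m:ℝ) - (m':ℝ)| ≤ (M:ℝ) := by
    intro m m' hm hm'
    have h1 : (m:ℝ) ≤ M := by exact_mod_cast hm
    have h2 : (m':ℝ) ≤ M := by exact_mod_cast hm'
    have h3 : (0:ℝ) ≤ m := Nat.cast_nonneg m
    have h4 : (0:ℝ) ≤ m' := Nat.cast_nonneg m'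
    rw [abs_le]; constructor <;> linarith
  have hdk := habs k k' hk hk'
  have hdl := habs l l' hl hl'
  have hybound : |γ*((k:ℝ) - k') + γ'*((l:ℝ) - l')| ≤ γ*M + γ'*M := by
    refine (abs_add_le _ _).trans ?_
    rw [abs_mul, abs_mul, abs_of_pos hγpos, abs_of_pos hγ'pos]
    exact add_le_add (mul_le_mul_of_nonneg_left hdk hγpos.le)
      (mul_le_mul_of_nonneg_left hdl hγ'pos.le)
  have hexpr : (β*(A k) + γ*k + (β*(B l) + γ'*l)) - (β*(A k') + γ*k' + (β*(B l') + γ'*l'))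
      = β*((A k + B l - A k' - B l' : ℤ):ℝ) + (γ*((k:ℝ) - k') + γ'*((l:ℝ) - l')) := by
    push_cast; ring
  rw [hexpr]
  rcases eq_or_ne (A k + B l - A k' - B l') 0 with hD0 | hD0
  · rcases eq_or_ne k k' with hkk | hkk
    · have hll : l ≠ l' := fun h => hne (by rw [hkk, h])
      have h1 := one_le_abs_nat_sub hll
      have hval : β*((A k + B l - A k' - B l' : ℤ):ℝ) + (γ*((k:ℝ) - k') + γ'*((l:ℝ) - l'))
          = γ'*((l:ℝ) - l') := by rw [hD0, hkk]; push_cast; ring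
      rw [hval, abs_mul, abs_of_pos hγ'pos]
      calc γ' = γ'*1 := (mul_one γ').symm
        _ ≤ _ := mul_le_mul_of_nonneg_left h1 hγ'pos.le
    · have h1 := one_le_abs_nat_sub hkk
      have hval : β*((A k + B l - A k' - B l' : ℤ):ℝ) + (γ*((k:ℝ) - k') + γ'*((l:ℝ) - l'))
          = γ*((k:ℝ) - k') + γ'*((l:ℝ) - l') := by rw [hD0]; push_cast; ring
      rw [hval]
      have ha : γ ≤ |γ*((k:ℝ) - k')| := by
        rw [abs_mul, abs_of_pos hγpos]
        calc γ = γ*1 := (mul_one γ).symm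
          _ ≤ _ := mul_le_mul_of_nonneg_left h1 hγpos.le
      have hb : |γ'*((l:ℝ) - l')| ≤ γ'*M := by
        rw [abs_mul, abs_of_pos hγ'pos]
        exact mul_le_mul_of_nonneg_left hdl hγ'pos.le
      have htri := abs_sub_abs_le_abs_sub (γ*((k:ℝ) - k')) (-(γ'*((l:ℝ) - l')))
      rw [sub_neg_eq_add, abs_neg] at htri
      have hM2' : 0 ≤ γ'*(M:ℝ) := by positivity
      linarith
  · have h1 : (1:ℝ) ≤ |((A k + B l - A k' - B l' : ℤ):ℝ)| := by
      have h2 := Int.one_le_abs hD0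
      have h3 : ((1:ℤ):ℝ) ≤ ((|A k + B l - A k' - B l'| : ℤ):ℝ) := by exact_mod_cast h2
      rw [Int.cast_abs] at h3
      exact_mod_cast h3
    have ha : β ≤ |β*((A k + B l - A k' - B l' : ℤ):ℝ)| := by
      rw [abs_mul, abs_of_pos hβ]
      calc β = β*1 := (mul_one β).symm
        _ ≤ _ := mul_le_mul_of_nonneg_left h1 hβ.le
    have htri := abs_sub_abs_le_abs_sub (β*((A k + B l - A k' - B l' : ℤ):ℝ))
      (-(γ*((k:ℝ) - k') + γ'*((l:ℝ) - l')))
    rw [sub_neg_eq_add, abs_neg] at htri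
    have hM2' : 0 ≤ γ'*(M:ℝ) := by positivity
    have hM2'' : 0 ≤ γ*(M:ℝ) := by positivity
    linarith
lemma pmap_dist (e e' : E) (q : Fin 5) (s t : unitInterval) :
    |pmap e' q s t - pmap e q s t| ≤ 2 * dist e' e := by
  have h1 : dist ((e' q).1 s) ((e q).1 s) ≤ dist (e' q).1 (e q).1 :=
    ContinuousMap.dist_apply_le_dist s
  have h2 : dist ((e' q).2 t) ((e q).2 t) ≤ dist (e' q).2 (e q).2 :=
    ContinuousMap.dist_apply_le_dist t
  have h3 : dist (e' q).1 (e q).1 ≤ dist (e' q) (e q) := by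
    rw [Prod.dist_eq]; exact le_max_left _ _
  have h4 : dist (e' q).2 (e q).2 ≤ dist (e' q) (e q) := by
    rw [Prod.dist_eq]; exact le_max_right _ _
  have h5 : dist (e' q) (e q) ≤ dist e' e := dist_le_pi_dist e' e q
  have := abs_sub_abs_le_abs_sub (pmap e' q s t) (pmap e q s t)
  have h6 : |pmap e' q s t - pmap e q s t| ≤ |(e' q).1 s - (e q).1 s| + |(e' q).2 t - (e q).2 t| := by
    unfold pmap; rw [add_sub_add_comm]; exact abs_add_le _ _
  rw [Real.dist_eq] at h1 h2
  linarith

lemma pmap_bound (e : E) (q : Fin 5) (s t : unitInterval) :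
    |pmap e q s t| ≤ ∑ q', (‖(e q').1‖ + ‖(e q').2‖) := by
  have h : |pmap e q s t| ≤ ‖(e q).1‖ + ‖(e q).2‖ := by
    refine (abs_add_le _ _).trans ?_
    exact add_le_add ((e q).1.norm_coe_le_norm s) ((e q).2.norm_coe_le_norm t)
  refine h.trans (Finset.single_le_sum (f := fun q' => ‖(e q').1‖ + ‖(e q').2‖) ?_ (Finset.mem_univ q))
  intro i _
  positivity

lemma isOpen_G (f : Csq) : IsOpen (G f) := by
  rw [Metric.isOpen_iff]
  rintro e ⟨θ, hθ, Φ, hB, herr⟩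
  set ρ := ((4/5)*‖f‖ - θ)/2 with hρdef
  have hρ : 0 < ρ := by simp only [hρdef]; linarith
  set R := ∑ q', (‖(e q').1‖ + ‖(e q').2‖) with hR
  have hR0 : 0 ≤ R := by positivity
  set K := Icc (-(R+1)) (R+1) with hK
  have huc : ∀ q : Fin 5, ∃ δ > 0, ∀ u ∈ K, ∀ v ∈ K, dist u v < δ →
      dist ((Φ q) u) ((Φ q) v) < ρ/5 := by
    intro q
    have h := (isCompact_Icc (a := -(R+1)) (b := R+1)).uniformContinuousOn_of_continuous
      ((Φ q).continuous.continuousOn)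
    rw [Metric.uniformContinuousOn_iff] at h
    exact h (ρ/5) (by linarith)
  choose δ hδpos hδ using huc
  set δm := Finset.univ.inf' (Finset.univ_nonempty : (Finset.univ : Finset (Fin 5)).Nonempty) δ with hδm
  have hδmpos : 0 < δm := by
    rw [hδm, Finset.lt_inf'_iff]
    exact fun q _ => hδpos q
  have hδmle : ∀ q, δm ≤ δ q := fun q => Finset.inf'_le δ (Finset.mem_univ q)
  refine ⟨min δm 1 / 2, by positivity, ?_⟩
  intro e' he'
  rw [Metric.mem_ball] at he'
  refine ⟨θ + ρ, by simp only [hρdef]; linarith, Φ, hB, ?_⟩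
  intro st
  have key : ∀ q : Fin 5, |Φ q (pmap e' q st.1 st.2) - Φ q (pmap e q st.1 st.2)| ≤ ρ/5 := by
    intro q
    have hu : pmap e q st.1 st.2 ∈ K := by
      have := pmap_bound e q st.1 st.2
      rw [hK, mem_Icc]
      rw [abs_le] at this
      constructor <;> linarith [this.1, this.2]
    have hd : |pmap e' q st.1 st.2 - pmap e q st.1 st.2| ≤ 2 * dist e' e := pmap_dist e e' q st.1 st.2
    have hdd : |pmap e' q st.1 st.2 - pmap e q st.1 st.2| < min δm 1 := by
      calc |pmap e' q st.1 st.2 - pmap e q st.1 st.2| ≤ 2 * dist e' e := hd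
        _ < 2 * (min δm 1 / 2) := by
            have := dist_nonneg (x := e') (y := e); linarith
        _ = min δm 1 := by ring
    have hv : pmap e' q st.1 st.2 ∈ K := by
      have h1 := pmap_bound e q st.1 st.2
      rw [hK, mem_Icc]
      rw [abs_le] at h1
      have h2 : |pmap e' q st.1 st.2 - pmap e q st.1 st.2| ≤ 1 := le_of_lt (hdd.trans_le (min_le_right _ _))
      rw [abs_le] at h2
      constructor <;> linarith [h1.1, h1.2, h2.1, h2.2]
    have := hδ q _ hv _ hu (by rw [Real.dist_eq]; exact lt_of_lt_of_le (by rw [← Real.dist_eq] at hdd ⊢; exact lt_of_lt_of_le hdd (min_le_left _ _)) (hδmle q))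
    rw [Real.dist_eq] at this
    exact le_of_lt this
  calc |f st - ∑ q, Φ q (pmap e' q st.1 st.2)|
      ≤ |f st - ∑ q, Φ q (pmap e q st.1 st.2)| + |∑ q, Φ q (pmap e q st.1 st.2) - ∑ q, Φ q (pmap e' q st.1 st.2)| := by
        have := abs_sub_le (f st) (∑ q, Φ q (pmap e q st.1 st.2)) (∑ q, Φ q (pmap e' q st.1 st.2))
        linarith [this]
    _ ≤ θ + ρ := by
        refine add_le_add (herr st) ?_
        rw [← Finset.sum_sub_distrib]
        refine (Finset.abs_sum_le_sum_abs _ _).trans ?_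
        calc ∑ q, |Φ q (pmap e q st.1 st.2) - Φ q (pmap e' q st.1 st.2)|
            ≤ ∑ _q : Fin 5, ρ/5 := by
              refine Finset.sum_le_sum fun q _ => ?_
              rw [abs_sub_comm]; exact key q
          _ = ρ := by simp; ring


def xi (q : Fin 5) (N n : ℕ) : unitInterval := projIcc 0 1 zero_le_one (Lpt q N n)

def rA (g : D) (β : ℝ) (q : Fin 5) (N n : ℕ) : ℤ := ⌊g (xi q N n)/β⌋

def rval (g : D) (β γ : ℝ) (q : Fin 5) (N n : ℕ) : ℝ := β*(rA g β q N n) + γ*n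

lemma rval_approx (g : D) {β γ : ℝ} (hβ : 0 < β) (hγ : 0 ≤ γ) (q : Fin 5) (N n : ℕ) :
    |rval g β γ q N n - g (xi q N n)| ≤ β + γ*n := by
  unfold rval rA
  set x := g (xi q N n)
  have h1 : β*(⌊x/β⌋:ℝ) ≤ x := by
    rw [mul_comm, ← le_div_iff₀ hβ]
    exact Int.floor_le _
  have h2 : x < β*(⌊x/β⌋:ℝ) + β := by
    have := Int.lt_floor_add_one (x/β)
    calc x = β*(x/β) := by field_simp
      _ < β*((⌊x/β⌋:ℝ) + 1) := by
          exact mul_lt_mul_of_pos_left this hβ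
      _ = β*(⌊x/β⌋:ℝ) + β := by ring
  rw [abs_le]
  have hγn : 0 ≤ γ*n := by positivity
  constructor <;> nlinarith

lemma Lpt_succ_sub (q : Fin 5) {N : ℕ} (hN : 1 ≤ N) (n : ℕ) :
    Lpt q N (n+1) - Lpt q N n = 1/N := by
  unfold Lpt
  have h5 : (5:ℝ)*N ≠ 0 := by positivity
  rw [div_sub_div_same, div_eq_div_iff h5 (by positivity : (N:ℝ) ≠ 0)]
  push_cast
  ring

lemma xi_dist_le {q : Fin 5} {N n : ℕ} (t : unitInterval) :
    dist (xi q N n) t ≤ |Lpt q N n - (t:ℝ)| := by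
  rw [Subtype.dist_eq, Real.dist_eq]
  unfold xi
  rw [coe_projIcc]
  exact clamp_abs _ _ t.2.1 t.2.2

set_option maxHeartbeats 2000000 in
lemma dense_G (f : Csq) (hf : 0 < ‖f‖) : Dense (G f) := by
  classical
  rw [Metric.dense_iff]
  intro e₀ δ hδ
  -- uniform continuity of f
  have hucf := CompactSpace.uniformContinuous_of_continuous
    (map_continuous f)
  rw [Metric.uniformContinuous_iff] at hucf
  obtain ⟨d1, hd1pos, hd1⟩ := hucf (‖f‖/24) (by positivity)
  -- uniform continuity of the inner functions
  have huc : ∀ g : D, ∃ d > 0, ∀ s t : unitInterval, dist s t < d → |g s - g t| < δ/8 := by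
    intro g
    have h := CompactSpace.uniformContinuous_of_continuous (map_continuous g)
    rw [Metric.uniformContinuous_iff] at h
    obtain ⟨d, hd, hh⟩ := h (δ/8) (by positivity)
    exact ⟨d, hd, fun s t hst => by rw [← Real.dist_eq]; exact hh hst⟩
  choose d0 hd0pos hd0 using huc
  -- the common scale
  set dmin : ℝ := min d1 (Finset.univ.inf' (Finset.univ_nonempty :
      (Finset.univ : Finset (Fin 5)).Nonempty) fun q => min (d0 (e₀ q).1) (d0 (e₀ q).2))
    with hdmin
  have hdminpos : 0 < dmin := by
    rw [hdmin, lt_min_iff]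
    refine ⟨hd1pos, ?_⟩
    rw [Finset.lt_inf'_iff]
    intro q _
    rw [lt_min_iff]
    exact ⟨hd0pos _, hd0pos _⟩
  have hdmin_d1 : dmin ≤ d1 := min_le_left _ _
  have hdmin_d01 : ∀ q : Fin 5, dmin ≤ d0 (e₀ q).1 := fun q =>
    le_trans (min_le_right _ _) (le_trans (Finset.inf'_le _ (Finset.mem_univ q)) (min_le_left _ _))
  have hdmin_d02 : ∀ q : Fin 5, dmin ≤ d0 (e₀ q).2 := fun q =>
    le_trans (min_le_right _ _) (le_trans (Finset.inf'_le _ (Finset.mem_univ q)) (min_le_right _ _))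
  obtain ⟨N, hNgt⟩ := exists_nat_gt (2/dmin)
  have hNpos : (0:ℝ) < N := lt_trans (by positivity) hNgt
  have hN1 : 1 ≤ N := by exact_mod_cast Nat.one_le_iff_ne_zero.mpr (by
    intro h; rw [h] at hNpos; simp at hNpos)
  have h2N : 2/(N:ℝ) < dmin := by
    rw [div_lt_iff₀ hNpos]
    rw [div_lt_iff₀ hdminpos] at hNgt
    linarith [mul_comm (N:ℝ) dmin ▸ hNgt]
  have h1N : 1/(N:ℝ) < dmin := lt_of_le_of_lt (by
    rw [div_le_div_iff₀ hNpos hNpos]; linarith) h2N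
  set M : ℕ := N + 1 with hM
  -- the value parameters
  set β : ℝ := δ/8 with hβdef
  have hβ : 0 < β := by rw [hβdef]; positivity
  set γ : ℝ := β/(8*((M:ℝ)+2)) with hγdef
  set γ' : ℝ := γ/(8*((M:ℝ)+2)) with hγ'def
  have hM2 : (0:ℝ) < (M:ℝ)+2 := by positivity
  have hγ : 0 < γ := by rw [hγdef]; positivity
  have hγ' : 0 < γ' := by rw [hγ'def]; positivity
  set η : ℝ := γ'/3 with hηdef
  have hη : 0 < η := by rw [hηdef]; positivity
  -- the perturbed inner functions
  set ev : E := fun q => (W q N M (rval (e₀ q).1 β γ q N), W q N M (rval (e₀ q).2 β γ' q N))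
    with hev
  -- index bound: values used have index ≤ M+1
  have hγM : γ*((M:ℝ)+1) ≤ β/8 := by
    rw [hγdef]
    rw [div_mul_eq_mul_div, div_le_div_iff₀ (by positivity) (by norm_num : (0:ℝ) < 8)]
    nlinarith
  have hγ'M : γ'*((M:ℝ)+1) ≤ γ/8 := by
    rw [hγ'def]
    rw [div_mul_eq_mul_div, div_le_div_iff₀ (by positivity) (by norm_num : (0:ℝ) < 8)]
    nlinarith
  have hγ'γ : γ' ≤ γ := by
    rw [hγ'def]
    rw [div_le_iff₀ (by positivity)]
    nlinarith
  have hγβ : γ ≤ β := by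
    rw [hγdef]
    rw [div_le_iff₀ (by positivity)]
    nlinarith
  -- closeness of the perturbation
  have hWclose : ∀ (q : Fin 5) (g : D) (γ₀ : ℝ), 0 < γ₀ → γ₀ ≤ γ →
      (∀ s t : unitInterval, dist s t < dmin → |g s - g t| < δ/8) →
      ∀ t : unitInterval, |W q N M (rval g β γ₀ q N) t - g t| ≤ 3*δ/8 := by
    intro q g γ₀ hγ₀ hγ₀γ hg t
    obtain ⟨k, hkN, h1, h2⟩ := cover hN1 t
    obtain ⟨c, hc0, hc1, hW⟩ := W_eval_on_block hN1 (by omega : k ≤ M) (rval g β γ₀ q N) h1 h2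
    rw [hW]
    have hkey : ∀ n, n ≤ M + 1 → |Lpt q N n - (t:ℝ)| ≤ 1/N →
        |rval g β γ₀ q N n - g t| ≤ 5*δ/16 := by
      intro n hn hLn
      have ha := rval_approx g hβ hγ₀.le q N n
      have hb : |g (xi q N n) - g t| < δ/8 := by
        apply hg
        calc dist (xi q N n) t ≤ |Lpt q N n - (t:ℝ)| := xi_dist_le t
          _ ≤ 1/N := hLn
          _ < dmin := h1N
      have hγ₀n : γ₀*n ≤ β/8 := by
        have hn' : (n:ℝ) ≤ (M:ℝ)+1 := by exact_mod_cast hn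
        calc γ₀*n ≤ γ*n := mul_le_mul_of_nonneg_right hγ₀γ (by positivity)
          _ ≤ γ*((M:ℝ)+1) := mul_le_mul_of_nonneg_left hn' hγ.le
          _ ≤ β/8 := hγM
      have habs := abs_sub_le (rval g β γ₀ q N n) (g (xi q N n)) (g t)
      have : β + β/8 + δ/8 ≤ 5*δ/16 := by rw [hβdef]; linarith
      linarith
    have hk1 : |Lpt q N k - (t:ℝ)| ≤ 1/N := by
      rw [abs_le]
      have := Lpt_succ_sub q hN1 k
      constructor <;> [linarith; linarith [(by positivity : (0:ℝ) ≤ 1/(N:ℝ))]]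
    have hk2 : |Lpt q N (k+1) - (t:ℝ)| ≤ 1/N := by
      rw [abs_le]
      have := Lpt_succ_sub q hN1 k
      constructor <;> [linarith [(by positivity : (0:ℝ) ≤ 1/(N:ℝ))]; linarith]
    have e1 := hkey k (by omega) hk1
    have e2 := hkey (k+1) (by omega) hk2
    have := seg_abs (rval g β γ₀ q N k) (rval g β γ₀ q N (k+1)) (g t) c hc0 hc1
    have hmax : max |rval g β γ₀ q N k - g t| |rval g β γ₀ q N (k+1) - g t| ≤ 5*δ/16 :=
      max_le e1 e2
    linarith
  have hdist : dist ev e₀ < δ := by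
    have hbound : ∀ q : Fin 5, dist (ev q) (e₀ q) ≤ 3*δ/8 := by
      intro q
      rw [Prod.dist_eq]
      refine max_le ?_ ?_
      · rw [ContinuousMap.dist_le (by positivity)]
        intro t
        rw [Real.dist_eq]
        exact hWclose q (e₀ q).1 γ hγ le_rfl
          (fun s t h => hd0 _ s t (lt_of_lt_of_le h (hdmin_d01 q))) t
      · rw [ContinuousMap.dist_le (by positivity)]
        intro t
        rw [Real.dist_eq]
        exact hWclose q (e₀ q).2 γ' hγ' hγ'γ
          (fun s t h => hd0 _ s t (lt_of_lt_of_le h (hdmin_d02 q))) t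
    calc dist ev e₀ ≤ 3*δ/8 := by
          rw [dist_pi_le_iff (by positivity)]
          exact hbound
      _ < δ := by linarith
  -- the outer functions
  set S : Finset (ℕ × ℕ) := (Finset.range (M+1)) ×ˢ (Finset.range (M+1)) with hS
  set cc : Fin 5 → ℕ × ℕ → ℝ := fun q p =>
    rval (e₀ q).1 β γ q N p.1 + rval (e₀ q).2 β γ' q N p.2 with hcc
  set vv : Fin 5 → ℕ × ℕ → ℝ := fun q p => f (xi q N p.1, xi q N p.2) / 3 with hvv
  have hsep : ∀ q : Fin 5, ∀ p ∈ S, ∀ p' ∈ S, p ≠ p' → 3*η ≤ |cc q p - cc q p'| := by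
    intro q p hp p' hp'  hne
    rw [hS, Finset.mem_product, Finset.mem_range, Finset.mem_range] at hp hp'
    have h := sep_lemma hβ M (rA (e₀ q).1 β q N) (rA (e₀ q).2 β q N)
      (Nat.lt_succ_iff.mp hp.1) (Nat.lt_succ_iff.mp hp.2)
      (Nat.lt_succ_iff.mp hp'.1) (Nat.lt_succ_iff.mp hp'.2)
      (by rwa [Prod.mk.eta, Prod.mk.eta])
    have heq : (β*(rA (e₀ q).1 β q N p.1) + (β/(8*((M:ℝ)+2)))*p.1 +
        (β*(rA (e₀ q).2 β q N p.2) + (β/(8*((M:ℝ)+2))/(8*((M:ℝ)+2)))*p.2))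
        - (β*(rA (e₀ q).1 β q N p'.1) + (β/(8*((M:ℝ)+2)))*p'.1 +
        (β*(rA (e₀ q).2 β q N p'.2) + (β/(8*((M:ℝ)+2))/(8*((M:ℝ)+2)))*p'.2))
        = cc q p - cc q p' := by
      rw [hcc]
      unfold rval
      try rw [hγdef, hγ'def]
      try push_cast
      try ring
    rw [heq] at h
    rw [hηdef]
    linarith
  have hvb : ∀ q : Fin 5, ∀ p ∈ S, |vv q p| ≤ ‖f‖/3 := by
    intro q p _
    have h := f.norm_coe_le_norm (xi q N p.1, xi q N p.2)
    rw [Real.norm_eq_abs] at h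
    have h3 : |vv q p| = |f (xi q N p.1, xi q N p.2)|/3 := by
      rw [hvv]
      rw [abs_div, abs_of_nonneg (by norm_num : (0:ℝ) ≤ 3)]
    rw [h3]
    linarith
  set Φf : Fin 5 → (ℝ →ᵇ ℝ) := fun q =>
    ofNormedAddCommGroup (Phi η S (cc q) (vv q)) (Phi_continuous hη S (cc q) (vv q)) (‖f‖/3)
      (fun z => by
        rw [Real.norm_eq_abs]
        exact Phi_bound hη S (cc q) (vv q) (by positivity) (hvb q) (hsep q) z)
    with hΦf
  refine ⟨ev, Metric.mem_ball.mpr hdist, (3/4)*‖f‖, by linarith, Φf, ?_, ?_⟩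
  · intro q
    rw [hΦf]
    exact norm_ofNormedAddCommGroup_le _ (by positivity) _
  intro st
  obtain ⟨s, t⟩ := st
  -- good/bad bookkeeping
  set Gd : Finset (Fin 5) := Finset.univ.filter (fun q => goodp q N s ∧ goodp q N t) with hGd
  have hcards : Gd.card + (Finset.univ.filter (fun q => ¬(goodp q N s ∧ goodp q N t))).card = 5 := by
    rw [hGd, Finset.card_filter_add_card_filter_not]
    simp
  have hbadcard : (Finset.univ.filter (fun q => ¬(goodp q N s ∧ goodp q N t))).card ≤ 2 := by
    have hsub : (Finset.univ.filter (fun q => ¬(goodp q N s ∧ goodp q N t))) ⊆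
        (Finset.univ.filter (fun q => ¬ goodp q N s)) ∪
        (Finset.univ.filter (fun q => ¬ goodp q N t)) := by
      intro q hq
      rw [Finset.mem_filter] at hq
      rw [Finset.mem_union, Finset.mem_filter, Finset.mem_filter]
      rcases not_and_or.mp hq.2 with h | h
      · exact Or.inl ⟨Finset.mem_univ q, h⟩
      · exact Or.inr ⟨Finset.mem_univ q, h⟩
    refine (Finset.card_le_card hsub).trans ((Finset.card_union_le _ _).trans ?_)
    have h1 : (Finset.univ.filter (fun q : Fin 5 => ¬ goodp q N s)).card ≤ 1 := by
      rw [Finset.card_le_one]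
      intro a ha b hb
      exact bad_unique hN1 s (Finset.mem_filter.mp ha).2 (Finset.mem_filter.mp hb).2
    have h2 : (Finset.univ.filter (fun q : Fin 5 => ¬ goodp q N t)).card ≤ 1 := by
      rw [Finset.card_le_one]
      intro a ha b hb
      exact bad_unique hN1 t (Finset.mem_filter.mp ha).2 (Finset.mem_filter.mp hb).2
    omega
  have hgcard : 3 ≤ Gd.card := by omega
  have hgcard5 : Gd.card ≤ 5 := by omega
  -- value on good cells
  have hgoodval : ∀ q ∈ Gd, |Φf q (pmap ev q s t) - f (s,t)/3| ≤ ‖f‖/72 := by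
    intro q hq
    rw [hGd, Finset.mem_filter] at hq
    obtain ⟨⟨k, hkM, hks1, hks2⟩, ⟨l, hlM, hlt1, hlt2⟩⟩ := hq.2
    have hkM' : k ≤ M := by omega
    have hlM' : l ≤ M := by omega
    have hp1 : pmap ev q s t = cc q (k, l) := by
      unfold pmap
      rw [hev]
      simp only
      rw [W_eval_on_interval hN1 hkM' _ hks1 hks2,
        W_eval_on_interval hN1 hlM' _ hlt1 hlt2]
      try simp only [hcc]
    have hmem : (k, l) ∈ S := by
      rw [hS, Finset.mem_product, Finset.mem_range, Finset.mem_range]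
      omega
    have hval : Φf q (pmap ev q s t) = vv q (k, l) := by
      rw [hp1, hΦf]
      simp only [coe_ofNormedAddCommGroup]
      exact Phi_value hη S (cc q) (vv q) hmem (hsep q)
    rw [hval]
    have hclose : dist ((xi q N k, xi q N l) : unitInterval × unitInterval) (s, t) < d1 := by
      rw [Prod.dist_eq]
      have hup : ∀ (n : ℕ) (u : unitInterval), Lpt q N n ≤ (u:ℝ) → (u:ℝ) ≤ bpt q N n →
          dist (xi q N n) u < d1 := by
        intro n u hu1 hu2
        have h4 : |Lpt q N n - (u:ℝ)| ≤ 4/(5*N) := by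
          rw [abs_le]
          unfold bpt at hu2
          constructor <;> [linarith; linarith [(by positivity : (0:ℝ) ≤ 4/(5*(N:ℝ)))]]
        calc dist (xi q N n) u ≤ |Lpt q N n - (u:ℝ)| := xi_dist_le u
          _ ≤ 4/(5*N) := h4
          _ < 1/N := by
              rw [div_lt_div_iff₀ (by positivity) hNpos]
              linarith
          _ < dmin := h1N
          _ ≤ d1 := hdmin_d1
      exact max_lt (hup k s hks1 hks2) (hup l t hlt1 hlt2)
    have hcl := hd1 hclose
    rw [Real.dist_eq] at hcl
    have h3 : |vv q (k,l) - f (s,t)/3| = |f (xi q N k, xi q N l) - f (s,t)|/3 := by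
      rw [hvv]
      simp only
      rw [div_sub_div_same, abs_div, abs_of_nonneg (by norm_num : (0:ℝ) ≤ 3)]
    rw [h3]
    linarith
  have hbadval : ∀ q : Fin 5, |Φf q (pmap ev q s t)| ≤ ‖f‖/3 := by
    intro q
    have := (Φf q).norm_coe_le_norm (pmap ev q s t)
    rw [Real.norm_eq_abs] at this
    refine this.trans ?_
    rw [hΦf]
    exact norm_ofNormedAddCommGroup_le _ (by positivity) _
  -- assemble
  have hsplit := Finset.sum_filter_add_sum_filter_not Finset.univ
    (fun q => goodp q N s ∧ goodp q N t) (fun q => Φf q (pmap ev q s t))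
  set SG := ∑ q ∈ Gd, Φf q (pmap ev q s t) with hSGdef
  set SB := ∑ q ∈ Finset.univ.filter (fun q => ¬(goodp q N s ∧ goodp q N t)),
    Φf q (pmap ev q s t) with hSBdef
  have htot : ∑ q, Φf q (pmap ev q (s, t).1 (s, t).2) = SG + SB := hsplit.symm
  have hSG : |SG - (Gd.card : ℝ) * (f (s,t)/3)| ≤ (Gd.card : ℝ) * (‖f‖/72) := by
    have h1 : SG - (Gd.card : ℝ) * (f (s,t)/3) = ∑ q ∈ Gd, (Φf q (pmap ev q s t) - f (s,t)/3) := by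
      rw [Finset.sum_sub_distrib, Finset.sum_const, nsmul_eq_mul]
    rw [h1]
    refine (Finset.abs_sum_le_sum_abs _ _).trans ?_
    calc ∑ q ∈ Gd, |Φf q (pmap ev q s t) - f (s,t)/3| ≤ ∑ _q ∈ Gd, ‖f‖/72 :=
          Finset.sum_le_sum hgoodval
      _ = (Gd.card : ℝ) * (‖f‖/72) := by rw [Finset.sum_const, nsmul_eq_mul]
  have hSB : |SB| ≤ (5 - (Gd.card : ℝ)) * (‖f‖/3) := by
    refine (Finset.abs_sum_le_sum_abs _ _).trans ?_
    calc ∑ q ∈ Finset.univ.filter (fun q => ¬(goodp q N s ∧ goodp q N t)),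
          |Φf q (pmap ev q s t)| ≤ ∑ _q ∈ Finset.univ.filter
            (fun q => ¬(goodp q N s ∧ goodp q N t)), ‖f‖/3 :=
          Finset.sum_le_sum (fun q _ => hbadval q)
      _ = ((Finset.univ.filter (fun q => ¬(goodp q N s ∧ goodp q N t))).card : ℝ) * (‖f‖/3) := by
          rw [Finset.sum_const, nsmul_eq_mul]
      _ = (5 - (Gd.card : ℝ)) * (‖f‖/3) := by
          have hcast : ((Finset.univ.filter (fun q => ¬(goodp q N s ∧ goodp q N t))).card : ℝ)
              = 5 - (Gd.card : ℝ) := by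
            have h5 : ((Gd.card + (Finset.univ.filter
                (fun q => ¬(goodp q N s ∧ goodp q N t))).card : ℕ) : ℝ) = 5 := by
              rw [hcards]; norm_num
            push_cast at h5
            linarith
          rw [hcast]
  have hfb : |f (s,t)| ≤ ‖f‖ := f.norm_coe_le_norm (s,t)
  rw [htot]
  have habs1 := abs_le.mp hSG
  have habs2 := abs_le.mp hSB
  have habs3 := abs_le.mp hfb
  rcases (by omega : Gd.card = 3 ∨ Gd.card = 4 ∨ Gd.card = 5) with h | h | h <;>
    rw [h] at habs1 habs2 <;>
    (push_cast at habs1 habs2; rw [abs_le]; constructor <;> linarith)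



def Smap (e : E) (Φ : Fin 5 → (ℝ →ᵇ ℝ)) : Csq :=
  ⟨fun st => ∑ q, Φ q (pmap e q st.1 st.2), by
    refine continuous_finset_sum _ fun q _ => ?_
    have hp : Continuous (fun st : unitInterval × unitInterval => pmap e q st.1 st.2) := by
      unfold pmap
      exact ((map_continuous (e q).1).comp continuous_fst).add
        ((map_continuous (e q).2).comp continuous_snd)
    exact (Φ q).continuous.comp hp⟩

lemma Smap_apply (e : E) (Φ : Fin 5 → (ℝ →ᵇ ℝ)) (st : unitInterval × unitInterval) :
    Smap e Φ st = ∑ q, Φ q (pmap e q st.1 st.2) := rfl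

lemma main_rep (F : Csq) : ∃ (Φ : Fin 5 → (ℝ →ᵇ ℝ)) (e : E),
    ∀ st : unitInterval × unitInterval, F st = ∑ q, (Φ q) (pmap e q st.1 st.2) := by
  obtain ⟨u, hu⟩ := TopologicalSpace.exists_dense_seq Csq
  have hB : BaireSpace E := BaireSpace.of_completelyPseudoMetrizable
  have hdense : Dense (⋂ n : {n : ℕ // u n ≠ 0}, G (u n.1)) := by
    refine dense_iInter_of_isOpen (fun i => isOpen_G (u i.1)) (fun i => ?_)
    exact dense_G (u i.1) (norm_pos_iff.mpr i.2)
  obtain ⟨e, he⟩ := hdense.nonempty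
  have heG : ∀ n, u n ≠ 0 → e ∈ G (u n) := fun n hn => Set.mem_iInter.mp he ⟨n, hn⟩
  -- one-step approximation
  have hstep : ∀ g : Csq, ∃ Φ : Fin 5 → (ℝ →ᵇ ℝ), (∀ q, ‖Φ q‖ ≤ ‖g‖) ∧
      ∀ st : unitInterval × unitInterval,
        |g st - ∑ q, Φ q (pmap e q st.1 st.2)| ≤ (9/10)*‖g‖ := by
    intro g
    rcases eq_or_ne g 0 with rfl | hg
    · refine ⟨0, by simp, fun st => ?_⟩
      simp
    · have hgpos : 0 < ‖g‖ := norm_pos_iff.mpr hg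
      obtain ⟨n, hn⟩ := hu.exists_dist_lt g (by positivity : (0:ℝ) < ‖g‖/100)
      have hdistn : ‖u n - g‖ < ‖g‖/100 := by
        rw [← dist_eq_norm, dist_comm]; exact hn
      have hun : u n ≠ 0 := by
        intro h0
        rw [h0, zero_sub, norm_neg] at hdistn
        linarith
      obtain ⟨θ, hθ, Φ, hΦb, hΦe⟩ := heG n hun
      have hn1 : ‖u n‖ ≤ (101/100)*‖g‖ := by
        have h2 := norm_sub_norm_le (u n) g
        linarith
      refine ⟨Φ, fun q => (hΦb q).trans (by linarith), fun st => ?_⟩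
      have h1 : |g st - u n st| ≤ ‖g - u n‖ := by
        have h := (g - u n).norm_coe_le_norm st
        rw [ContinuousMap.sub_apply, Real.norm_eq_abs] at h
        exact h
      have h2 := hΦe st
      have h3 : ‖g - u n‖ = ‖u n - g‖ := norm_sub_rev _ _
      have h4 := abs_sub_le (g st) (u n st) (∑ q, Φ q (pmap e q st.1 st.2))
      linarith
  choose step hstep1 hstep2 using hstep
  -- the residual sequence
  set gs : ℕ → Csq := fun k => Nat.rec F (fun _ g => g - Smap e (step g)) k with hgsdef
  have hgs0 : gs 0 = F := rfl
  have hgss : ∀ k, gs (k+1) = gs k - Smap e (step (gs k)) := fun k => rfl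
  have hdecay : ∀ k, ‖gs (k+1)‖ ≤ (9/10)*‖gs k‖ := by
    intro k
    rw [hgss k]
    rw [ContinuousMap.norm_le _ (by positivity)]
    intro st
    rw [ContinuousMap.sub_apply, Smap_apply, Real.norm_eq_abs]
    exact hstep2 (gs k) st
  have hnorm : ∀ k, ‖gs k‖ ≤ (9/10)^k * ‖F‖ := by
    intro k
    induction k with
    | zero => simp [hgs0]
    | succ k ih =>
        calc ‖gs (k+1)‖ ≤ (9/10)*‖gs k‖ := hdecay k
          _ ≤ (9/10)*((9/10)^k*‖F‖) := by
              exact mul_le_mul_of_nonneg_left ih (by norm_num)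
          _ = (9/10)^(k+1)*‖F‖ := by ring
  have hgeo : Summable (fun k : ℕ => (9/10 : ℝ)^k * ‖F‖) :=
    (summable_geometric_of_lt_one (by norm_num) (by norm_num)).mul_right _
  have hsummable : ∀ q, Summable (fun k => step (gs k) q) := by
    intro q
    refine Summable.of_norm_bounded hgeo (fun k => ?_)
    exact (hstep1 (gs k) q).trans (hnorm k)
  refine ⟨fun q => ∑' k, step (gs k) q, e, fun st => ?_⟩
  have heval : ∀ (q : Fin 5) (z : ℝ), (∑' k, step (gs k) q) z = ∑' k, step (gs k) q z := by
    intro q z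
    exact ContinuousLinearMap.map_tsum (evalCLM (𝕜 := ℝ) z) (hsummable q)
  have hptsummable : ∀ (q : Fin 5) (z : ℝ), Summable (fun k => step (gs k) q z) := by
    intro q z
    refine Summable.of_norm_bounded hgeo (fun k => ?_)
    calc ‖step (gs k) q z‖ ≤ ‖step (gs k) q‖ := (step (gs k) q).norm_coe_le_norm z
      _ ≤ (9/10)^k*‖F‖ := (hstep1 (gs k) q).trans (hnorm k)
  -- telescoping
  have hterm_eq : ∀ k, (∑ q, step (gs k) q (pmap e q st.1 st.2)) = gs k st - gs (k+1) st := by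
    intro k
    rw [hgss k, ContinuousMap.sub_apply, Smap_apply]
    ring
  have hzero : Filter.Tendsto (fun n => gs n st) Filter.atTop (nhds 0) := by
    apply squeeze_zero_norm (fun n => ((gs n).norm_coe_le_norm st).trans (hnorm n))
    have := (tendsto_pow_atTop_nhds_zero_of_lt_one (by norm_num : (0:ℝ) ≤ 9/10)
      (by norm_num : (9/10:ℝ) < 1)).mul_const ‖F‖
    rwa [zero_mul] at this
  have htends : Filter.Tendsto
      (fun n => ∑ k ∈ Finset.range n, (∑ q, step (gs k) q (pmap e q st.1 st.2)))
      Filter.atTop (nhds (F st)) := by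
    have hps : ∀ n, ∑ k ∈ Finset.range n, (∑ q, step (gs k) q (pmap e q st.1 st.2))
        = F st - gs n st := by
      intro n
      simp only [hterm_eq]
      rw [Finset.sum_range_sub' (fun k => gs k st)]
      rw [hgs0]
    simp only [hps]
    have := Filter.Tendsto.sub (tendsto_const_nhds (x := F st)) hzero
    rwa [sub_zero] at this
  have hnorms : Summable fun k => ‖∑ q, step (gs k) q (pmap e q st.1 st.2)‖ := by
    refine Summable.of_nonneg_of_le (fun k => norm_nonneg _) (fun k => ?_)
      (hgeo.mul_left 5)
    calc ‖∑ q, step (gs k) q (pmap e q st.1 st.2)‖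
        ≤ ∑ q, ‖step (gs k) q (pmap e q st.1 st.2)‖ := norm_sum_le _ _
      _ ≤ ∑ _q : Fin 5, (9/10)^k*‖F‖ := by
          refine Finset.sum_le_sum (fun q _ => ?_)
          calc ‖step (gs k) q (pmap e q st.1 st.2)‖ ≤ ‖step (gs k) q‖ :=
                (step (gs k) q).norm_coe_le_norm _
            _ ≤ (9/10)^k*‖F‖ := (hstep1 (gs k) q).trans (hnorm k)
      _ = 5*((9/10)^k*‖F‖) := by
          rw [Finset.sum_const, Finset.card_univ, Fintype.card_fin, nsmul_eq_mul]
          push_cast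
          ring
  have hHasSum : HasSum (fun k => ∑ q, step (gs k) q (pmap e q st.1 st.2)) (F st) :=
    (hasSum_iff_tendsto_nat_of_summable_norm hnorms).mpr htends
  have hFst : F st = ∑' k, ∑ q, step (gs k) q (pmap e q st.1 st.2) := hHasSum.tsum_eq.symm
  rw [hFst]
  rw [Summable.tsum_finsetSum (fun q _ => hptsummable q (pmap e q st.1 st.2))]
  refine Finset.sum_congr rfl (fun q _ => ?_)
  rw [heval]
end KA

/-- The `n = 2` instance of the Kolmogorov–Arnold representation theorem: the
outer sum has exactly `2·2 + 1 = 5` terms. -/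
theorem kolmogorov_arnold_dim_two (f : (Fin 2 → ℝ) → ℝ)
    (hf : ContinuousOn f (Set.Icc 0 1)) :
    ∃ (Φ : Fin 5 → ℝ → ℝ) (φ : Fin 5 → Fin 2 → ℝ → ℝ),
      (∀ q, Continuous (Φ q)) ∧
      (∀ q p, Continuous (φ q p)) ∧
      ∀ x ∈ Set.Icc (0 : Fin 2 → ℝ) 1,
        f x = ∑ q, Φ q (φ q 0 (x 0) + φ q 1 (x 1)) := by
  classical
  set v : unitInterval × unitInterval → (Fin 2 → ℝ) :=
    fun st i => if i = 0 then (st.1 : ℝ) else (st.2 : ℝ) with hv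
  have hvcont : Continuous v := by
    refine continuous_pi fun i => ?_
    by_cases h : i = 0
    · simp only [hv, h, if_pos]
      exact continuous_subtype_val.comp continuous_fst
    · simp only [hv, h, if_neg, ite_false]
      exact continuous_subtype_val.comp continuous_snd
  have hvmem : ∀ st, v st ∈ Set.Icc (0 : Fin 2 → ℝ) 1 := by
    intro st
    rw [Set.mem_Icc]
    constructor
    · intro i
      by_cases h : i = 0
      · simp only [hv, h, if_pos, Pi.zero_apply]
        exact st.1.2.1
      · simp only [hv, h, if_neg, ite_false, Pi.zero_apply]
        exact st.2.2.1
    · intro i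
      by_cases h : i = 0
      · simp only [hv, h, if_pos, Pi.one_apply]
        exact st.1.2.2
      · simp only [hv, h, if_neg, ite_false, Pi.one_apply]
        exact st.2.2.2
  set F : KA.Csq := ⟨fun st => f (v st), hf.comp_continuous hvcont hvmem⟩ with hF
  obtain ⟨Φ, e, hrep⟩ := KA.main_rep F
  refine ⟨fun q z => Φ q z,
    fun q p x => if p = 0 then (e q).1 (Set.projIcc 0 1 zero_le_one x)
      else (e q).2 (Set.projIcc 0 1 zero_le_one x),
    fun q => (Φ q).continuous, ?_, ?_⟩
  · intro q p
    by_cases h : p = 0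
    · simp only [h, if_pos]
      exact (map_continuous (e q).1).comp continuous_projIcc
    · simp only [h, if_neg, ite_false]
      exact (map_continuous (e q).2).comp continuous_projIcc
  · intro x hx
    rw [Set.mem_Icc] at hx
    have hx0 : x 0 ∈ Set.Icc (0:ℝ) 1 := ⟨hx.1 0, hx.2 0⟩
    have hx1 : x 1 ∈ Set.Icc (0:ℝ) 1 := ⟨hx.1 1, hx.2 1⟩
    have hfx : f x = F (⟨x 0, hx0⟩, ⟨x 1, hx1⟩) := by
      rw [hF]
      simp only [ContinuousMap.coe_mk]
      congr 1
      funext i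
      by_cases h : i = 0
      · simp only [hv, h, if_pos]
      · have h1 : i = 1 := by omega
        simp only [hv, h, if_neg, ite_false, h1]
        rw [if_neg (show ¬(1:Fin 2) = 0 by decide)]
    rw [hfx, hrep (⟨x 0, hx0⟩, ⟨x 1, hx1⟩)]
    refine Finset.sum_congr rfl fun q _ => ?_
    congr 1
    have hproj0 : Set.projIcc (0:ℝ) 1 zero_le_one (x 0) = ⟨x 0, hx0⟩ :=
      Set.projIcc_of_mem _ hx0
    have hproj1 : Set.projIcc (0:ℝ) 1 zero_le_one (x 1) = ⟨x 1, hx1⟩ :=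
      Set.projIcc_of_mem _ hx1
    simp [KA.pmap, hproj0, hproj1]
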